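/- Let a ∈ ℝ ∪ {−∞} and let φ : (a,∞) → ℝ be smooth with φ'(t) > 0 and φ''(t) ≥ 0 for all t. Let (x, z, θ) : [0, s₋) → (0,∞) × (a,∞) × ℝ be the maximal solution of the profile-curve system x'(s) = cos θ(s), z'(s) = sin θ(s), θ'(s) = φ'(z(s))·cos θ(s) − sin θ(s)/x(s), with initial conditions x(0) = x₀ > 0, z(0) = z₀ ∈ (a,∞), θ(0) = π. Then there exists s₀ ∈ (0, s₋) such that θ(s₀) = π/2. -/

import Mathlib

open Set Filter Topology
open scoped ENNReal

/-- The interval `[0, ω)` (all of `[0,∞)` when `ω = ∞`). -/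
def Dom (ω : ℝ≥0∞) : Set ℝ := {s : ℝ | 0 ≤ s ∧ ENNReal.ofReal s < ω}

lemma aux_proj1 {f : ℝ → ℝ × ℝ × ℝ} {v : ℝ × ℝ × ℝ} {s : Set ℝ} {t : ℝ}
    (h : HasDerivWithinAt f v s t) : HasDerivWithinAt (fun u => (f u).1) v.1 s t := by
  simpa using h.hasFDerivWithinAt.fst.hasDerivWithinAt

lemma aux_proj2 {f : ℝ → ℝ × ℝ × ℝ} {v : ℝ × ℝ × ℝ} {s : Set ℝ} {t : ℝ}
    (h : HasDerivWithinAt f v s t) : HasDerivWithinAt (fun u => (f u).2.1) v.2.1 s t := by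
  simpa using h.hasFDerivWithinAt.snd.fst.hasDerivWithinAt

lemma aux_proj3 {f : ℝ → ℝ × ℝ × ℝ} {v : ℝ × ℝ × ℝ} {s : Set ℝ} {t : ℝ}
    (h : HasDerivWithinAt f v s t) : HasDerivWithinAt (fun u => (f u).2.2) v.2.2 s t := by
  simpa using h.hasFDerivWithinAt.snd.snd.hasDerivWithinAt

lemma aux_sincos {w : ℝ} (h1 : Real.pi/2 ≤ w) (h2 : w ≤ Real.pi) :
    1 ≤ Real.sin w - Real.cos w := by
  have hs : 0 ≤ Real.sin w := Real.sin_nonneg_of_nonneg_of_le_pi (le_trans (by positivity) h1) h2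
  have hc : Real.cos w ≤ 0 := Real.cos_nonpos_of_pi_div_two_le_of_le h1 (by linarith [Real.pi_pos])
  nlinarith [Real.sin_sq_add_cos_sq w]

/-- Monotonicity from a derivative bound on a closed interval inside a set. -/
lemma aux_mono {f g : ℝ → ℝ} {D : Set ℝ} {u v : ℝ}
    (hD : Icc u v ⊆ D)
    (hf : ∀ s ∈ D, HasDerivWithinAt f (g s) D s)
    (hg : ∀ s ∈ Ioo u v, 0 ≤ g s)
    (huv : u ≤ v) : f u ≤ f v := by
  have hcont : ContinuousOn f (Icc u v) := fun s hs =>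
    ((hf s (hD hs)).continuousWithinAt).mono hD
  have hdiff : ∀ s ∈ Ioo u v, HasDerivAt f (g s) s := by
    intro s hs
    exact (hf s (hD (Ioo_subset_Icc_self hs))).hasDerivAt
      (mem_nhds_iff.2 ⟨Ioo u v, Ioo_subset_Icc_self.trans hD, isOpen_Ioo, hs⟩)
  have hmono := monotoneOn_of_deriv_nonneg (convex_Icc u v) hcont
      (fun s hs => ((hdiff s (by rwa [interior_Icc] at hs)).differentiableAt).differentiableWithinAt)
      (fun s hs => by
        rw [(hdiff s (by rwa [interior_Icc] at hs)).deriv]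
        exact hg s (by rwa [interior_Icc] at hs))
  exact hmono (left_mem_Icc.2 huv) (right_mem_Icc.2 huv) huv

lemma aux_anti {f g : ℝ → ℝ} {D : Set ℝ} {u v : ℝ}
    (hD : Icc u v ⊆ D)
    (hf : ∀ s ∈ D, HasDerivWithinAt f (g s) D s)
    (hg : ∀ s ∈ Ioo u v, g s ≤ 0)
    (huv : u ≤ v) : f v ≤ f u := by
  have := aux_mono (f := fun s => -f s) (g := fun s => -g s) hD
    (fun s hs => (hf s hs).neg) (fun s hs => neg_nonneg.2 (hg s hs)) huv
  change -f u ≤ -f v at this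
  linarith

theorem stmt_12 (a : EReal) (φ φ' φ'' : ℝ → ℝ)
    (hφsm : ContDiffOn ℝ (⊤ : ℕ∞) φ {t : ℝ | a < (t : EReal)})
    (hφd : ∀ t : ℝ, a < (t : EReal) → HasDerivAt φ (φ' t) t)
    (hφd2 : ∀ t : ℝ, a < (t : EReal) → HasDerivAt φ' (φ'' t) t)
    (hφ'pos : ∀ t : ℝ, a < (t : EReal) → 0 < φ' t)
    (hφ''nn : ∀ t : ℝ, a < (t : EReal) → 0 ≤ φ'' t)
    (x₀ z₀ : ℝ) (hx₀ : 0 < x₀) (hz₀ : a < (z₀ : EReal))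
    (sm : ℝ≥0∞) (hsm : 0 < sm)
    (x z θ : ℝ → ℝ)
    (hx0 : x 0 = x₀) (hz0 : z 0 = z₀) (hθ0 : θ 0 = Real.pi)
    (hxpos : ∀ s ∈ Dom sm, 0 < x s)
    (hzmem : ∀ s ∈ Dom sm, a < (z s : EReal))
    (hdx : ∀ s ∈ Dom sm, HasDerivWithinAt x (Real.cos (θ s)) (Dom sm) s)
    (hdz : ∀ s ∈ Dom sm, HasDerivWithinAt z (Real.sin (θ s)) (Dom sm) s)
    (hdθ : ∀ s ∈ Dom sm, HasDerivWithinAt θ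
      (φ' (z s) * Real.cos (θ s) - Real.sin (θ s) / x s) (Dom sm) s)
    -- maximality: no solution with the same initial data on a larger interval
    (hmax : ∀ sm' : ℝ≥0∞, sm < sm' →
      ¬ ∃ x' z' θ' : ℝ → ℝ,
        x' 0 = x₀ ∧ z' 0 = z₀ ∧ θ' 0 = Real.pi ∧
        (∀ s ∈ Dom sm', 0 < x' s) ∧
        (∀ s ∈ Dom sm', a < (z' s : EReal)) ∧
        (∀ s ∈ Dom sm', HasDerivWithinAt x' (Real.cos (θ' s)) (Dom sm') s) ∧
        (∀ s ∈ Dom sm', HasDerivWithinAt z' (Real.sin (θ' s)) (Dom sm') s) ∧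
        (∀ s ∈ Dom sm', HasDerivWithinAt θ'
          (φ' (z' s) * Real.cos (θ' s) - Real.sin (θ' s) / x' s) (Dom sm') s)) :
    ∃ s₀ : ℝ, 0 < s₀ ∧ ENNReal.ofReal s₀ < sm ∧ θ s₀ = Real.pi / 2 := by
  by_contra hcon
  push_neg at hcon
  have pi_pos := Real.pi_pos
  have hmemD : ∀ {s t : ℝ}, s ∈ Dom sm → 0 ≤ t → t ≤ s → t ∈ Dom sm := by
    intro s t hs ht hts
    exact ⟨ht, lt_of_le_of_lt (ENNReal.ofReal_le_ofReal hts) hs.2⟩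
  have h0D : (0:ℝ) ∈ Dom sm := ⟨le_refl 0, by simpa using hsm⟩
  have hθc : ContinuousOn θ (Dom sm) := fun s hs => (hdθ s hs).continuousWithinAt
  have hxc : ContinuousOn x (Dom sm) := fun s hs => (hdx s hs).continuousWithinAt
  have hzc : ContinuousOn z (Dom sm) := fun s hs => (hdz s hs).continuousWithinAt
  -- Step A: θ > π/2 throughout
  have hθgt : ∀ s ∈ Dom sm, Real.pi/2 < θ s := by
    intro s hs
    rcases lt_or_ge (Real.pi/2) (θ s) with h | h
    · exact h
    · exfalso
      have hsub : Icc 0 s ⊆ Dom sm := fun u hu => hmemD hs hu.1 hu.2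
      have hivt := intermediate_value_Icc' hs.1 (hθc.mono hsub)
      have hm : Real.pi/2 ∈ Icc (θ s) (θ 0) := ⟨h, by rw [hθ0]; linarith⟩
      obtain ⟨u, hu, hθu⟩ := hivt hm
      have hu0 : 0 < u := by
        rcases hu.1.lt_or_eq with h' | h'
        · exact h'
        · exfalso; rw [← h', hθ0] at hθu; linarith
      exact hcon u hu0 (hsub hu).2 hθu
  -- φ' is monotone
  have hφ'mono : ∀ t₁ t₂ : ℝ, a < (t₁ : EReal) → t₁ ≤ t₂ → φ' t₁ ≤ φ' t₂ := by
    intro t₁ t₂ h1 h12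
    have hsub : Icc t₁ t₂ ⊆ {t : ℝ | a < (t:EReal)} := fun u hu =>
      lt_of_lt_of_le h1 (EReal.coe_le_coe_iff.2 hu.1)
    exact aux_mono hsub (fun s hs => (hφd2 s hs).hasDerivWithinAt)
      (fun s hs => hφ''nn s (hsub (Ioo_subset_Icc_self hs))) h12
  set c₀ : ℝ := min (φ' z₀) x₀⁻¹ with hc₀def
  have hc₀ : 0 < c₀ := lt_min (hφ'pos z₀ hz₀) (by positivity)
  -- Step B': key quantitative decrease given a π-bound on an initial segment
  have hkey : ∀ s ∈ Dom sm, (∀ u ∈ Icc 0 s, θ u ≤ Real.pi) →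
      x s ≤ x₀ ∧ z₀ ≤ z s ∧ θ s + c₀ * s ≤ Real.pi := by
    intro s hs hbd
    have hsub : Icc 0 s ⊆ Dom sm := fun u hu => hmemD hs hu.1 hu.2
    have hrange : ∀ u ∈ Icc 0 s, Real.pi/2 ≤ θ u ∧ θ u ≤ Real.pi :=
      fun u hu => ⟨(hθgt u (hsub hu)).le, hbd u hu⟩
    have hxle : ∀ u ∈ Icc 0 s, x u ≤ x₀ := by
      intro u hu
      have hsub' : Icc 0 u ⊆ Dom sm := fun w hw => hmemD hs hw.1 (hw.2.trans hu.2)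
      have := aux_anti hsub' hdx (fun w hw => by
        have h := hrange w ⟨hw.1.le, hw.2.le.trans hu.2⟩
        exact Real.cos_nonpos_of_pi_div_two_le_of_le h.1 (by linarith [h.2])) hu.1
      rwa [hx0] at this
    have hzge : ∀ u ∈ Icc 0 s, z₀ ≤ z u := by
      intro u hu
      have hsub' : Icc 0 u ⊆ Dom sm := fun w hw => hmemD hs hw.1 (hw.2.trans hu.2)
      have := aux_mono hsub' hdz (fun w hw => by
        have h := hrange w ⟨hw.1.le, hw.2.le.trans hu.2⟩
        exact Real.sin_nonneg_of_nonneg_of_le_pi (by linarith [h.1]) h.2) hu.1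
      rwa [hz0] at this
    refine ⟨hxle s (right_mem_Icc.2 hs.1), hzge s (right_mem_Icc.2 hs.1), ?_⟩
    have hθdec := aux_anti (f := fun u => θ u + c₀ * u)
      (g := fun u => (φ' (z u) * Real.cos (θ u) - Real.sin (θ u) / x u) + c₀) hsub
      (fun u hu => by
        have h1 := (hdθ u hu).add (((hasDerivAt_id u).const_mul c₀).hasDerivWithinAt)
        simpa [Pi.add_def] using h1)
      (fun u hu => by
        have huI : u ∈ Icc 0 s := Ioo_subset_Icc_self hu
        obtain ⟨h1, h2⟩ := hrange u huI
        have hcw : Real.cos (θ u) ≤ 0 :=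
          Real.cos_nonpos_of_pi_div_two_le_of_le h1 (by linarith)
        have hsw : 0 ≤ Real.sin (θ u) :=
          Real.sin_nonneg_of_nonneg_of_le_pi (by linarith) h2
        have hsc := aux_sincos h1 h2
        have hxw : 0 < x u := hxpos u (hsub huI)
        have hxw₀ : x u ≤ x₀ := hxle u huI
        have hφw : c₀ ≤ φ' (z u) :=
          le_trans (min_le_left _ _) (hφ'mono z₀ (z u) hz₀ (hzge u huI))
        have e1 : φ' (z u) * Real.cos (θ u) ≤ c₀ * Real.cos (θ u) :=
          mul_le_mul_of_nonpos_right hφw hcw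
        have e2 : Real.sin (θ u) / x₀ ≤ Real.sin (θ u) / x u :=
          div_le_div_of_nonneg_left hsw hxw hxw₀
        have e3 : c₀ * Real.sin (θ u) ≤ Real.sin (θ u) / x₀ := by
          rw [div_eq_mul_inv, mul_comm]
          exact mul_le_mul_of_nonneg_left (min_le_right _ _) hsw
        nlinarith [mul_nonneg hc₀.le (sub_nonneg.2 hsc)]) hs.1
    change θ s + c₀ * s ≤ θ 0 + c₀ * 0 at hθdec
    rw [hθ0] at hθdec
    linarith
  -- Step B: barrier θ ≤ π
  have hθle : ∀ s ∈ Dom sm, θ s ≤ Real.pi := by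
    intro s₁ hs₁
    by_contra hgt
    push_neg at hgt
    have hs₁0 : 0 < s₁ := by
      rcases hs₁.1.lt_or_eq with h | h
      · exact h
      · exfalso; rw [← h, hθ0] at hgt; exact lt_irrefl _ hgt
    set A : Set ℝ := {t | t ∈ Icc 0 s₁ ∧ ∀ u ∈ Icc 0 t, θ u ≤ Real.pi} with hA
    have h0A : (0:ℝ) ∈ A := ⟨⟨le_refl 0, hs₁0.le⟩, fun u hu => by
      have h : u = 0 := le_antisymm hu.2 hu.1
      rw [h, hθ0]⟩
    have hAbdd : BddAbove A := ⟨s₁, fun t ht => ht.1.2⟩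
    set T := sSup A with hT
    have hT0 : 0 ≤ T := le_csSup hAbdd h0A
    have hTs₁ : T ≤ s₁ := csSup_le ⟨0, h0A⟩ (fun t ht => ht.1.2)
    have hTD : T ∈ Dom sm := hmemD hs₁ hT0 hTs₁
    have hTbd : ∀ u, 0 ≤ u → u < T → θ u ≤ Real.pi := by
      intro u hu huT
      obtain ⟨t, htA, hut⟩ := exists_lt_of_lt_csSup ⟨0, h0A⟩ huT
      exact htA.2 u ⟨hu, hut.le⟩
    have hθT : θ T ≤ Real.pi := by
      rcases hT0.lt_or_eq with h | h
      · have hne : (𝓝[Ico 0 T] T).NeBot := by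
          rw [← mem_closure_iff_nhdsWithin_neBot, closure_Ico h.ne]
          exact ⟨hT0, le_refl T⟩
        have hsub : Ico 0 T ⊆ Dom sm := fun u hu => hmemD hTD hu.1 hu.2.le
        have htd : Tendsto θ (𝓝[Ico 0 T] T) (𝓝 (θ T)) := (hθc T hTD).mono hsub
        exact le_of_tendsto htd (eventually_mem_nhdsWithin.mono (fun u hu => hTbd u hu.1 hu.2))
      · rw [← h, hθ0]
    have hTA : T ∈ A := ⟨⟨hT0, hTs₁⟩, fun u hu => by
      rcases hu.2.lt_or_eq with h | h
      · exact hTbd u hu.1 h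
      · rw [h]; exact hθT⟩
    have hTlt : T < s₁ := by
      rcases hTs₁.lt_or_eq with h | h
      · exact h
      · exfalso
        have := hTA.2 s₁ ⟨hs₁.1, le_of_eq h.symm⟩
        linarith
    have hext : ∃ ε > (0:ℝ), T + ε ≤ s₁ ∧ ∀ u ∈ Ioc T (T+ε), θ u ≤ Real.pi := by
      rcases hT0.lt_or_eq with hTpos | hT0'
      · -- T > 0 : θ T < π, use continuity
        have hkeyT := (hkey T hTD hTA.2).2.2
        have hθTlt : θ T < Real.pi := by nlinarith
        have hev : ∀ᶠ u in 𝓝[Dom sm] T, θ u < Real.pi :=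
          (hθc T hTD).eventually_lt_const hθTlt
        obtain ⟨U, hUo, hTU, hUsub⟩ := mem_nhdsWithin.1 hev
        obtain ⟨δ, hδ, hball⟩ := Metric.isOpen_iff.1 hUo T hTU
        refine ⟨min (δ/2) (s₁ - T), lt_min (by positivity) (by linarith), ?_, ?_⟩
        · have := min_le_right (δ/2) (s₁ - T); linarith
        · intro u hu
          have hu0 : 0 ≤ u := le_trans hT0 hu.1.le
          have hus₁ : u ≤ s₁ := by
            have := min_le_right (δ/2) (s₁ - T); have := hu.2; linarith
          have huD : u ∈ Dom sm := hmemD hs₁ hu0 hus₁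
          have hub : u ∈ Metric.ball T δ := by
            rw [Metric.mem_ball, Real.dist_eq, abs_of_pos (by linarith [hu.1])]
            have := hu.2; have := min_le_left (δ/2) (s₁ - T); linarith
          exact (hUsub ⟨hball hub, huD⟩).le
      · -- T = 0 : use the negative initial derivative
        have hd0 := hdθ 0 h0D
        rw [hx0, hz0, hθ0] at hd0
        have heq : φ' z₀ * Real.cos Real.pi - Real.sin Real.pi / x₀ = -φ' z₀ := by
          rw [Real.cos_pi, Real.sin_pi]; field_simp; simp
        rw [heq] at hd0
        have hslope := hasDerivWithinAt_iff_tendsto_slope.1 hd0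
        have hev : ∀ᶠ u in 𝓝[Dom sm \ {0}] 0, slope θ 0 u < 0 :=
          hslope.eventually_lt_const (neg_lt_zero.2 (hφ'pos z₀ hz₀))
        obtain ⟨U, hUo, hTU, hUsub⟩ := mem_nhdsWithin.1 hev
        obtain ⟨δ, hδ, hball⟩ := Metric.isOpen_iff.1 hUo 0 hTU
        refine ⟨min (δ/2) s₁, lt_min (by positivity) hs₁0, ?_, ?_⟩
        · rw [← hT0']
          simpa using min_le_right (δ/2) s₁

        · intro u hu
          rw [← hT0'] at hu
          have hu0 : 0 < u := hu.1
          have hus₁ : u ≤ s₁ := by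
            have := min_le_right (δ/2) s₁; have := hu.2; linarith
          have huD : u ∈ Dom sm := hmemD hs₁ hu0.le hus₁
          have hub : u ∈ Metric.ball (0:ℝ) δ := by
            rw [Metric.mem_ball, Real.dist_eq, sub_zero, abs_of_pos hu0]
            have := hu.2; have := min_le_left (δ/2) s₁; linarith
          have hsl : slope θ 0 u < 0 := hUsub ⟨hball hub, huD, by simp [hu0.ne']⟩
          have hsl' : (θ u - θ 0) / (u - 0) < 0 := by rwa [slope_def_field] at hsl
          rw [hθ0, sub_zero] at hsl'
          rcases div_neg_iff.1 hsl' with ⟨h1, h2⟩ | ⟨h1, h2⟩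
          · linarith
          · linarith
    obtain ⟨ε, hε, hεs₁, hεbd⟩ := hext
    have hTεA : T + ε ∈ A := ⟨⟨by linarith, hεs₁⟩, fun u hu => by
      rcases le_or_gt u T with h | h
      · exact hTA.2 u ⟨hu.1, h⟩
      · exact hεbd u ⟨h, hu.2⟩⟩
    have := le_csSup hAbdd hTεA
    linarith
  -- Step C: the maximal time is finite
  have hkey' : ∀ s ∈ Dom sm, x s ≤ x₀ ∧ z₀ ≤ z s ∧ θ s + c₀*s ≤ Real.pi :=
    fun s hs => hkey s hs (fun u hu => hθle u (hmemD hs hu.1 hu.2))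
  have hsmtop : sm ≠ ⊤ := by
    intro htop
    have hD : Real.pi / c₀ ∈ Dom sm :=
      ⟨by positivity, by rw [htop]; exact ENNReal.ofReal_lt_top⟩
    have h1 := (hkey' _ hD).2.2
    have h2 := hθgt _ hD
    have h3 : c₀ * (Real.pi / c₀) = Real.pi := by field_simp
    linarith
  set r := sm.toReal with hrdef
  have hrpos : 0 < r := ENNReal.toReal_pos hsm.ne' hsmtop
  have hsmr : sm = ENNReal.ofReal r := (ENNReal.ofReal_toReal hsmtop).symm
  have hDom : Dom sm = Ico 0 r := by
    ext u
    constructor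
    · rintro ⟨h1, h2⟩
      rw [hsmr, ENNReal.ofReal_lt_ofReal_iff hrpos] at h2
      exact ⟨h1, h2⟩
    · rintro ⟨h1, h2⟩
      exact ⟨h1, by rw [hsmr]; exact (ENNReal.ofReal_lt_ofReal_iff hrpos).2 h2⟩
  rw [hDom] at hxpos hzmem hdx hdz hdθ hθgt hθle hkey' hθc hxc hzc
  have h0r : (0:ℝ) ∈ Ico 0 r := ⟨le_refl 0, hrpos⟩
  have hsubIcc : ∀ {u v : ℝ}, u ∈ Ico 0 r → v ∈ Ico 0 r → Icc u v ⊆ Ico 0 r :=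
    fun hu hv w hw => ⟨hu.1.trans hw.1, lt_of_le_of_lt hw.2 hv.2⟩
  have hrange : ∀ u ∈ Ico 0 r, Real.pi/2 ≤ θ u ∧ θ u ≤ Real.pi :=
    fun u hu => ⟨(hθgt u hu).le, hθle u hu⟩
  have hcosn : ∀ u ∈ Ico 0 r, Real.cos (θ u) ≤ 0 := fun u hu =>
    Real.cos_nonpos_of_pi_div_two_le_of_le (hrange u hu).1 (by linarith [(hrange u hu).2])
  have hsinn : ∀ u ∈ Ico 0 r, 0 ≤ Real.sin (θ u) := fun u hu =>
    Real.sin_nonneg_of_nonneg_of_le_pi (by linarith [(hrange u hu).1]) (hrange u hu).2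
  have hxanti : ∀ {u v : ℝ}, u ∈ Ico 0 r → v ∈ Ico 0 r → u ≤ v → x v ≤ x u := by
    intro u v hu hv huv
    exact aux_anti (hsubIcc hu hv) hdx
      (fun w hw => hcosn w (hsubIcc hu hv (Ioo_subset_Icc_self hw))) huv
  have hzmono : ∀ {u v : ℝ}, u ∈ Ico 0 r → v ∈ Ico 0 r → u ≤ v → z u ≤ z v := by
    intro u v hu hv huv
    exact aux_mono (hsubIcc hu hv) hdz
      (fun w hw => hsinn w (hsubIcc hu hv (Ioo_subset_Icc_self hw))) huv
  have hθanti : ∀ {u v : ℝ}, u ∈ Ico 0 r → v ∈ Ico 0 r → u ≤ v → θ v ≤ θ u := by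
    intro u v hu hv huv
    have hder := aux_anti (f := fun w => θ w + c₀ * w)
      (g := fun w => (φ' (z w) * Real.cos (θ w) - Real.sin (θ w) / x w) + c₀) (hsubIcc hu hv)
      (fun w hw => by
        have h1 := (hdθ w hw).add (((hasDerivAt_id w).const_mul c₀).hasDerivWithinAt)
        simpa [Pi.add_def] using h1)
      (fun w hw => by
        have hwI : w ∈ Ico 0 r := hsubIcc hu hv (Ioo_subset_Icc_self hw)
        have hcw := hcosn w hwI
        have hsw := hsinn w hwI
        have hsc := aux_sincos (hrange w hwI).1 (hrange w hwI).2
        have hxw : 0 < x w := hxpos w hwI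
        have hxw₀ : x w ≤ x₀ := by
          have := hxanti h0r hwI hwI.1
          rwa [hx0] at this
        have hφw : c₀ ≤ φ' (z w) := by
          refine le_trans (min_le_left _ _) (hφ'mono z₀ (z w) hz₀ ?_)
          have := hzmono h0r hwI hwI.1
          rwa [hz0] at this
        have e1 : φ' (z w) * Real.cos (θ w) ≤ c₀ * Real.cos (θ w) :=
          mul_le_mul_of_nonpos_right hφw hcw
        have e2 : Real.sin (θ w) / x₀ ≤ Real.sin (θ w) / x w :=
          div_le_div_of_nonneg_left hsw hxw hxw₀
        have e3 : c₀ * Real.sin (θ w) ≤ Real.sin (θ w) / x₀ := by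
          rw [div_eq_mul_inv, mul_comm]
          exact mul_le_mul_of_nonneg_left (min_le_right _ _) hsw
        nlinarith [mul_nonneg hc₀.le (sub_nonneg.2 hsc)]) huv
    change θ v + c₀ * v ≤ θ u + c₀ * u at hder
    nlinarith [mul_le_mul_of_nonneg_left huv hc₀.le]
  have hzub : ∀ s ∈ Ico 0 r, z s ≤ z₀ + s := by
    intro s hs
    have := aux_anti (f := fun w => z w - w) (g := fun w => Real.sin (θ w) - 1)
      (hsubIcc h0r hs)
      (fun w hw => by simpa [Pi.sub_def] using (hdz w hw).sub ((hasDerivAt_id w).hasDerivWithinAt))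
      (fun w hw => by simpa using Real.sin_le_one (θ w)) hs.1
    change z s - s ≤ z 0 - 0 at this
    rw [hz0] at this
    linarith
  have hxlb1 : ∀ s ∈ Ico 0 r, x₀ - s ≤ x s := by
    intro s hs
    have := aux_mono (f := fun w => x w + w) (g := fun w => Real.cos (θ w) + 1)
      (hsubIcc h0r hs)
      (fun w hw => by simpa [Pi.add_def] using (hdx w hw).add ((hasDerivAt_id w).hasDerivWithinAt))
      (fun w hw => by
        show (0:ℝ) ≤ Real.cos (θ w) + 1
        linarith [Real.neg_one_le_cos (θ w)]) hs.1
    change x 0 + 0 ≤ x s + s at this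
    rw [hx0] at this
    linarith
  set δ : ℝ := min (x₀/2) (r/2) with hδdef
  have hδpos : 0 < δ := lt_min (by positivity) (by positivity)
  have hδltr : δ < r := lt_of_le_of_lt (min_le_right _ _) (by linarith)
  have hδD : δ ∈ Ico 0 r := ⟨hδpos.le, hδltr⟩
  have hθδlt : θ δ < Real.pi := by
    have := (hkey' δ hδD).2.2
    nlinarith
  have hsinδ : 0 < Real.sin (θ δ) :=
    Real.sin_pos_of_pos_of_lt_pi (by linarith [(hrange δ hδD).1]) hθδlt
  set ℓ : ℝ := x δ * Real.sin (θ δ) with hℓdef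
  have hℓpos : 0 < ℓ := mul_pos (hxpos δ hδD) hsinδ
  have hflux : ∀ s ∈ Ico 0 r, δ ≤ s → ℓ ≤ x s * Real.sin (θ s) := by
    intro s hs hδs
    exact aux_mono (f := fun w => x w * Real.sin (θ w))
      (g := fun w => Real.cos (θ w) * Real.sin (θ w) +
        x w * (Real.cos (θ w) * (φ' (z w) * Real.cos (θ w) - Real.sin (θ w) / x w)))
      (hsubIcc hδD hs)
      (fun w hw => (hdx w hw).mul
        ((Real.hasDerivAt_sin (θ w)).comp_hasDerivWithinAt w (hdθ w hw)))
      (fun w hw => by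
        have hwI : w ∈ Ico 0 r := hsubIcc hδD hs (Ioo_subset_Icc_self hw)
        have hxw : 0 < x w := hxpos w hwI
        show (0:ℝ) ≤ Real.cos (θ w) * Real.sin (θ w) +
          x w * (Real.cos (θ w) * (φ' (z w) * Real.cos (θ w) - Real.sin (θ w) / x w))
        have heq : Real.cos (θ w) * Real.sin (θ w) +
            x w * (Real.cos (θ w) * (φ' (z w) * Real.cos (θ w) - Real.sin (θ w) / x w)) =
            x w * φ' (z w) * Real.cos (θ w)^2 := by
          field_simp
          ring
        rw [heq]
        exact mul_nonneg (mul_nonneg hxw.le (hφ'pos _ (hzmem w hwI)).le) (sq_nonneg _)) hδs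
  set ℓ₀ : ℝ := min ℓ (x₀/2) with hℓ₀def
  have hℓ₀pos : 0 < ℓ₀ := lt_min hℓpos (by positivity)
  have hxlb : ∀ s ∈ Ico 0 r, ℓ₀ ≤ x s := by
    intro s hs
    rcases le_or_gt s δ with h | h
    · have h1 := hxlb1 s hs
      have h2 : δ ≤ x₀/2 := min_le_left _ _
      have := min_le_right ℓ (x₀/2)
      linarith
    · have h1 := hflux s hs h.le
      have h2 : x s * Real.sin (θ s) ≤ x s * 1 :=
        mul_le_mul_of_nonneg_left (Real.sin_le_one _) (hxpos s hs).le
      have := min_le_left ℓ (x₀/2)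
      linarith
  -- limits at r
  have hIooN : (Ioo (0:ℝ) r).Nonempty := ⟨δ, hδpos, hδltr⟩
  have hIoosub : Ioo (0:ℝ) r ⊆ Ico 0 r := fun w hw => ⟨hw.1.le, hw.2⟩
  have hIoomem : Ioo (0:ℝ) r ∈ 𝓝[<] r := Ioo_mem_nhdsLT_of_mem ⟨hrpos, le_refl r⟩
  have hxm : MonotoneOn (fun s => -x s) (Ioo 0 r) := fun u hu v hv huv =>
    neg_le_neg (hxanti (hIoosub hu) (hIoosub hv) huv)
  have hxbdd : BddAbove ((fun s => -x s) '' Ioo 0 r) := by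
    refine ⟨0, ?_⟩
    rintro _ ⟨u, hu, rfl⟩
    exact neg_nonpos.2 (hxpos u (hIoosub hu)).le
  set xr : ℝ := -sSup ((fun s => -x s) '' Ioo 0 r) with hxrdef
  have hxlim : Tendsto x (𝓝[<] r) (𝓝 xr) := by
    have := (hxm.tendsto_nhdsWithin_Ioo_left hIooN hxbdd).neg
    simpa using this
  have hθm : MonotoneOn (fun s => -θ s) (Ioo 0 r) := fun u hu v hv huv =>
    neg_le_neg (hθanti (hIoosub hu) (hIoosub hv) huv)
  have hθbdd : BddAbove ((fun s => -θ s) '' Ioo 0 r) := by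
    refine ⟨-(Real.pi/2), ?_⟩
    rintro _ ⟨u, hu, rfl⟩
    exact neg_le_neg (hrange u (hIoosub hu)).1
  set θr : ℝ := -sSup ((fun s => -θ s) '' Ioo 0 r) with hθrdef
  have hθlim : Tendsto θ (𝓝[<] r) (𝓝 θr) := by
    have := (hθm.tendsto_nhdsWithin_Ioo_left hIooN hθbdd).neg
    simpa using this
  have hzm : MonotoneOn z (Ioo 0 r) := fun u hu v hv huv =>
    hzmono (hIoosub hu) (hIoosub hv) huv
  have hzbdd : BddAbove (z '' Ioo 0 r) := by
    refine ⟨z₀ + r, ?_⟩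
    rintro _ ⟨u, hu, rfl⟩
    have := hzub u (hIoosub hu)
    linarith [hu.2]
  set zr : ℝ := sSup (z '' Ioo 0 r) with hzrdef
  have hzlim : Tendsto z (𝓝[<] r) (𝓝 zr) := hzm.tendsto_nhdsWithin_Ioo_left hIooN hzbdd
  have hxr_lb : ℓ₀ ≤ xr := by
    refine ge_of_tendsto hxlim ?_
    filter_upwards [hIoomem] with u hu
    exact hxlb u (hIoosub hu)
  have hzr_lb : z₀ ≤ zr := by
    refine ge_of_tendsto hzlim ?_
    filter_upwards [hIoomem] with u hu
    have := hzmono h0r (hIoosub hu) hu.1.le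
    rwa [hz0] at this
  have hxr_pos : 0 < xr := lt_of_lt_of_le hℓ₀pos hxr_lb
  have hzr_mem : a < (zr : EReal) := lt_of_lt_of_le hz₀ (EReal.coe_le_coe_iff.2 hzr_lb)
  -- Step E: extend the solution past r via Picard–Lindelöf
  have hUopen : IsOpen {t : ℝ | a < (t:EReal)} := by
    have he : {t : ℝ | a < (t:EReal)} = ((↑) : ℝ → EReal) ⁻¹' (Ioi a) := rfl
    rw [he]
    exact isOpen_Ioi.preimage continuous_coe_real_ereal
  have hφ'cd : ContDiffOn ℝ 1 φ' {t : ℝ | a < (t:EReal)} := by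
    have hd : ContDiffOn ℝ 1 (deriv φ) {t : ℝ | a < (t:EReal)} :=
      hφsm.deriv_of_isOpen hUopen (WithTop.coe_le_coe.2 le_top)
    exact hd.congr (fun t ht => ((hφd t ht).deriv).symm)
  set F : ℝ × ℝ × ℝ → ℝ × ℝ × ℝ := fun p =>
    (Real.cos p.2.2, Real.sin p.2.2,
      φ' p.2.1 * Real.cos p.2.2 - Real.sin p.2.2 / p.1) with hFdef
  have h22 : ContDiff ℝ 1 (fun p : ℝ × ℝ × ℝ => p.2.2) := contDiff_snd.comp contDiff_snd
  have h21 : ContDiff ℝ 1 (fun p : ℝ × ℝ × ℝ => p.2.1) := contDiff_fst.comp contDiff_snd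
  have hcos : ContDiff ℝ 1 (fun p : ℝ × ℝ × ℝ => Real.cos p.2.2) :=
    (Real.contDiff_cos.of_le le_top).comp h22
  have hsin : ContDiff ℝ 1 (fun p : ℝ × ℝ × ℝ => Real.sin p.2.2) :=
    (Real.contDiff_sin.of_le le_top).comp h22
  have hφ'part : ContDiffAt ℝ 1 (fun p : ℝ × ℝ × ℝ => φ' p.2.1) (xr, zr, θr) :=
    ContDiffAt.comp (xr, zr, θr)
      (hφ'cd.contDiffAt (hUopen.mem_nhds hzr_mem)) h21.contDiffAt
  have hFcd : ContDiffAt ℝ 1 F (xr, zr, θr) := by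
    rw [hFdef]
    refine ContDiffAt.prodMk hcos.contDiffAt (ContDiffAt.prodMk hsin.contDiffAt ?_)
    refine ContDiffAt.sub (hφ'part.mul hcos.contDiffAt) ?_
    exact ContDiffAt.div hsin.contDiffAt contDiff_fst.contDiffAt hxr_pos.ne'
  obtain ⟨f, hfr, ε, hεpos, hfode⟩ := hFcd.exists_forall_mem_closedBall_exists_eq_forall_mem_Ioo_hasDerivAt₀ r
  obtain ⟨ρz, hρzpos, hballz⟩ := Metric.isOpen_iff.1 hUopen zr hzr_mem
  set ρ : ℝ := min xr ρz with hρdef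
  have hρpos : 0 < ρ := lt_min hxr_pos hρzpos
  have hfc : ContinuousAt f r := (hfode r ⟨by linarith, by linarith⟩).continuousAt
  obtain ⟨δ', hδ'pos, himp⟩ := Metric.continuousAt_iff.1 hfc ρ hρpos
  set ε' : ℝ := min (δ'/2) (ε/2) with hε'def
  have hε'pos : 0 < ε' := lt_min (by positivity) (by positivity)
  have hε'ε : ε' ≤ ε/2 := min_le_right _ _
  have hfnear : ∀ u, r ≤ u → u ≤ r + ε' → dist (f u) (xr, zr, θr) < ρ := by
    intro u h1 h2
    have hd : dist u r < δ' := by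
      rw [Real.dist_eq, abs_of_nonneg (by linarith)]
      have := min_le_left (δ'/2) (ε/2)
      linarith
    have := himp hd
    rwa [hfr] at this
  have hfx : ∀ u, r ≤ u → u ≤ r + ε' → 0 < (f u).1 := by
    intro u h1 h2
    have hd := hfnear u h1 h2
    have c1 : dist (f u).1 xr ≤ dist (f u) (xr, zr, θr) := by
      rw [Prod.dist_eq]; exact le_max_left _ _
    have c2 : |(f u).1 - xr| < xr := by
      rw [← Real.dist_eq]
      exact lt_of_le_of_lt c1 (lt_of_lt_of_le hd (min_le_left _ _))
    have := abs_lt.1 c2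
    linarith [this.1]
  have hfz : ∀ u, r ≤ u → u ≤ r + ε' → a < (((f u).2.1 : ℝ) : EReal) := by
    intro u h1 h2
    have hd := hfnear u h1 h2
    have c1 : dist (f u).2.1 zr ≤ dist (f u) (xr, zr, θr) := by
      rw [Prod.dist_eq, Prod.dist_eq]
      exact le_trans (le_max_left _ _) (le_max_right _ _)
    have c2 : (f u).2.1 ∈ Metric.ball zr ρz := by
      rw [Metric.mem_ball]
      exact lt_of_le_of_lt c1 (lt_of_lt_of_le hd (min_le_right _ _))
    exact hballz c2
  -- Step G: the glued solution
  set V : ℝ → ℝ × ℝ × ℝ := fun u => (x u, z u, θ u) with hVdef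
  set G : ℝ → ℝ × ℝ × ℝ := fun u => if u < r then V u else f u with hGdef
  have hGr : G r = (xr, zr, θr) := by
    rw [hGdef]
    simp only [lt_irrefl, if_false]
    exact hfr
  have hVd : ∀ s ∈ Ico 0 r, HasDerivWithinAt V (F (V s)) (Ico 0 r) s := by
    intro s hs
    have h1 := (hdx s hs).prodMk ((hdz s hs).prodMk (hdθ s hs))
    have h2 : F (V s) = (Real.cos (θ s), Real.sin (θ s),
        φ' (z s) * Real.cos (θ s) - Real.sin (θ s) / x s) := by
      rw [hFdef, hVdef]
    rw [h2]
    exact h1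
  have hVlim : Tendsto V (𝓝[<] r) (𝓝 (xr, zr, θr)) :=
    hxlim.prodMk_nhds (hzlim.prodMk_nhds hθlim)
  have hGdiff : ∀ u ∈ Ioo (0:ℝ) r, HasDerivAt G (F (V u)) u := by
    intro u hu
    have h1 : HasDerivAt V (F (V u)) u :=
      (hVd u (hIoosub hu)).hasDerivAt
        (mem_nhds_iff.2 ⟨Ioo 0 r, hIoosub, isOpen_Ioo, hu⟩)
    refine h1.congr_of_eventuallyEq ?_
    filter_upwards [Iio_mem_nhds hu.2] with w hw
    rw [hGdef]
    simp only [if_pos (show w < r from hw)]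
  set D' : Set ℝ := Ico 0 (r + ε') with hD'def
  have hGd : ∀ s ∈ D', HasDerivWithinAt G (F (G s)) D' s := by
    intro s hs
    rcases lt_trichotomy s r with hlt | heq | hgt
    · have h1 := hVd s ⟨hs.1, hlt⟩
      have h2 : HasDerivWithinAt V (F (V s)) (D' ∩ Iio r) s :=
        h1.mono (fun w hw => ⟨hw.1.1, hw.2⟩)
      have h3 : HasDerivWithinAt V (F (V s)) D' s :=
        (hasDerivWithinAt_inter (Iio_mem_nhds hlt)).1 h2
      have hGsV : G s = V s := by rw [hGdef]; simp only [if_pos hlt]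
      rw [hGsV]
      refine h3.congr_of_eventuallyEq ?_ hGsV
      filter_upwards [mem_nhdsWithin_of_mem_nhds (Iio_mem_nhds hlt)] with w hw
      rw [hGdef]
      simp only [if_pos (show w < r from hw)]
    · subst heq
      have L1 : HasDerivWithinAt G (F (xr, zr, θr)) (Iic r) r := by
        refine hasDerivWithinAt_Iic_of_tendsto_deriv (s := Ioo 0 r)
          (fun u hu => (hGdiff u hu).differentiableAt.differentiableWithinAt) ?_ hIoomem ?_
        · have h1 : Tendsto G (𝓝[Ioo 0 r] r) (𝓝 (xr, zr, θr)) := by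
            refine Tendsto.congr' ?_ (hVlim.mono_left (nhdsWithin_mono r Ioo_subset_Iio_self))
            exact eventually_of_mem self_mem_nhdsWithin
              (fun w hw => by rw [hGdef]; simp only [if_pos (show w < r from hw.2)])
          have h2 : Tendsto G (𝓝[Ioo 0 r] r) (𝓝 (G r)) := by rw [hGr]; exact h1
          exact h2
        · have h4 : Tendsto (fun u => F (V u)) (𝓝[<] r) (𝓝 (F (xr, zr, θr))) :=
            (hFcd.continuousAt.tendsto).comp hVlim
          refine Tendsto.congr' ?_ h4
          filter_upwards [hIoomem] with u hu
          exact ((hGdiff u hu).deriv).symm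
      have L2 : HasDerivWithinAt G (F (xr, zr, θr)) (Ici r) r := by
        have h5 : HasDerivAt f (F (f r)) r := hfode r ⟨by linarith, by linarith⟩
        rw [hfr] at h5
        refine (h5.hasDerivWithinAt).congr (fun w hw => ?_) ?_
        · rw [hGdef]; simp only [not_lt.2 (mem_Ici.1 hw), if_false]
        · rw [hGdef]; simp only [lt_irrefl, if_false]
      have hunion := L1.union L2
      rw [Iic_union_Ici] at hunion
      rw [hGr]
      exact hunion.mono (subset_univ _)
    · have hsIoo : s ∈ Ioo (r - ε) (r + ε) := by
        constructor
        · linarith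
        · have := hs.2
          rw [hD'def] at hs
          linarith [hs.2, hε'ε, hεpos]
      have h1 := hfode s hsIoo
      have hGsf : G s = f s := by rw [hGdef]; simp only [not_lt.2 hgt.le, if_false]
      have h2 : HasDerivAt G (F (f s)) s := by
        refine h1.congr_of_eventuallyEq ?_
        filter_upwards [Ioi_mem_nhds hgt] with w hw
        rw [hGdef]
        simp only [not_lt.2 (le_of_lt (show r < w from hw)), if_false]
      rw [hGsf]
      exact h2.hasDerivWithinAt
  -- contradiction with maximality
  have hsm' : sm < ENNReal.ofReal (r + ε') := by
    rw [hsmr]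
    exact (ENNReal.ofReal_lt_ofReal_iff (by linarith)).2 (by linarith)
  have hDom' : Dom (ENNReal.ofReal (r + ε')) = Ico 0 (r + ε') := by
    ext u
    constructor
    · rintro ⟨h1, h2⟩
      rw [ENNReal.ofReal_lt_ofReal_iff (by linarith)] at h2
      exact ⟨h1, h2⟩
    · rintro ⟨h1, h2⟩
      exact ⟨h1, (ENNReal.ofReal_lt_ofReal_iff (by linarith)).2 h2⟩
  have hG0 : G 0 = (x₀, z₀, Real.pi) := by
    rw [hGdef]
    simp only [if_pos hrpos, hVdef]
    rw [hx0, hz0, hθ0]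
  refine hmax _ hsm' ⟨fun u => (G u).1, fun u => (G u).2.1, fun u => (G u).2.2,
    by simp only [hG0], by simp only [hG0], by simp only [hG0], ?_, ?_, ?_, ?_, ?_⟩
  · intro u hu
    rw [hDom'] at hu
    rcases lt_or_ge u r with h | h
    · have hGu : G u = V u := by rw [hGdef]; simp only [if_pos h]
      show 0 < (G u).1
      rw [hGu]
      exact hxpos u ⟨hu.1, h⟩
    · have hGu : G u = f u := by rw [hGdef]; simp only [not_lt.2 h, if_false]
      show 0 < (G u).1
      rw [hGu]
      exact hfx u h hu.2.le
  · intro u hu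
    rw [hDom'] at hu
    rcases lt_or_ge u r with h | h
    · have hGu : G u = V u := by rw [hGdef]; simp only [if_pos h]
      show a < (((G u).2.1 : ℝ) : EReal)
      rw [hGu]
      exact hzmem u ⟨hu.1, h⟩
    · have hGu : G u = f u := by rw [hGdef]; simp only [not_lt.2 h, if_false]
      show a < (((G u).2.1 : ℝ) : EReal)
      rw [hGu]
      exact hfz u h hu.2.le
  · intro u hu
    rw [hDom'] at hu ⊢
    have h := aux_proj1 (hGd u hu)
    simpa [hFdef] using h
  · intro u hu
    rw [hDom'] at hu ⊢
    have h := aux_proj2 (hGd u hu)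
    simpa [hFdef] using h
  · intro u hu
    rw [hDom'] at hu ⊢
    have h := aux_proj3 (hGd u hu)
    simpa [hFdef] using h
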